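/- Let α, β be positive integers and let j = lcm(α, β). Then for all x, y ∈ R1^α × R2^β, the inner product satisfies ⟨S(x), y⟩ = ⟨x, S^{j−1}(y)⟩, where S is the cyclic shift. -/

import Mathlib

open TrivSqZeroExt Finset

set_option synthInstance.maxHeartbeats 1000000
set_option maxHeartbeats 2000000

noncomputable section

/-- `Z2` is the field with two elements. -/
abbrev Z2 := ZMod 2

/-- `R1 = Z2[u] = Z2 + uZ2` with `u² = 0`. -/
abbrev R1 := DualNumber Z2

/-- `R2 = Z2[u,v] = Z2 + uZ2 + vZ2 + uvZ2` with `u² = v² = 0`, `uv = vu`,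
realized as dual numbers over `R1`. -/
abbrev R2 := DualNumber R1

/-- The element `u` of `R1`. -/
def u1 : R1 := DualNumber.eps

/-- The inclusion of `Z2` into `R1`. -/
def ofZ2R1 (a : Z2) : R1 := TrivSqZeroExt.inl a

/-- The element `u` of `R2`. -/
def uu : R2 := TrivSqZeroExt.inl DualNumber.eps

/-- The element `v` of `R2`. -/
def vv : R2 := DualNumber.eps

/-- The inclusion of `Z2` into `R2`. -/
def ofZ2R2 (a : Z2) : R2 := TrivSqZeroExt.inl (TrivSqZeroExt.inl a)

/-- `η : R2 → R1`, `a + ub + vc + uvd ↦ a + ub` (reduction modulo `v`),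
as a ring homomorphism. -/
def eta : R2 →+* R1 where
  toFun := TrivSqZeroExt.fst
  map_one' := rfl
  map_mul' := TrivSqZeroExt.fst_mul
  map_zero' := rfl
  map_add' := TrivSqZeroExt.fst_add

/-- The ambient space `R1^α × R2^β`. -/
abbrev V (α β : ℕ) := (Fin α → R1) × (Fin β → R2)

/-- The scalar multiplication of `R2` on `R1^α × R2^β`:
`l • (a₀,…,a_{α-1},b₀,…,b_{β-1}) = (η(l)a₀,…,η(l)a_{α-1}, lb₀,…,lb_{β-1})`. -/
instance instSMulV (α β : ℕ) : SMul R2 (V α β) :=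
  ⟨fun l w => (fun i => eta l * w.1 i, fun j => l * w.2 j)⟩

lemma smulV_def {α β : ℕ} (l : R2) (w : V α β) :
    l • w = (fun i => eta l * w.1 i, fun j => l * w.2 j) := rfl

instance instMulActionV (α β : ℕ) : MulAction R2 (V α β) where
  one_smul w := by
    refine Prod.ext (funext fun i => ?_) (funext fun j => ?_)
    · show eta 1 * w.1 i = w.1 i; simp
    · show (1 : R2) * w.2 j = w.2 j; simp
  mul_smul l l' w := by
    refine Prod.ext (funext fun i => ?_) (funext fun j => ?_)
    · show eta (l * l') * w.1 i = eta l * (eta l' * w.1 i); rw [map_mul, mul_assoc]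
    · show l * l' * w.2 j = l * (l' * w.2 j); rw [mul_assoc]

instance instDistribMulActionV (α β : ℕ) : DistribMulAction R2 (V α β) where
  smul_zero l := by
    refine Prod.ext (funext fun i => ?_) (funext fun j => ?_)
    · show eta l * (0 : R1) = 0; simp
    · show l * (0 : R2) = 0; simp
  smul_add l w w' := by
    refine Prod.ext (funext fun i => ?_) (funext fun j => ?_)
    · show eta l * (w.1 i + w'.1 i) = eta l * w.1 i + eta l * w'.1 i; rw [mul_add]
    · show l * (w.2 j + w'.2 j) = l * w.2 j + l * w'.2 j; rw [mul_add]

/-- `R1^α × R2^β` is an `R2`-module; a `Z2[u]Z2[u,v]`-additive code is an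
`R2`-submodule of this module. -/
instance instModuleV (α β : ℕ) : Module R2 (V α β) where
  add_smul l l' w := by
    refine Prod.ext (funext fun i => ?_) (funext fun j => ?_)
    · show eta (l + l') * w.1 i = eta l * w.1 i + eta l' * w.1 i
      rw [map_add, add_mul]
    · show (l + l') * w.2 j = l * w.2 j + l' * w.2 j; rw [add_mul]
  zero_smul w := by
    refine Prod.ext (funext fun i => ?_) (funext fun j => ?_)
    · show eta 0 * w.1 i = 0; simp
    · show (0 : R2) * w.2 j = 0; simp

/-- The cyclic shift `S` on `R1^α × R2^β`. -/
def shiftS {α β : ℕ} [NeZero α] [NeZero β] (w : V α β) : V α β :=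
  (fun i => w.1 (i - 1), fun j => w.2 (j - 1))

/-- The `(1+u, 1+uv)`-constacyclic shift `τ` on `R1^α × R2^β`. -/
def tau {α β : ℕ} [NeZero α] [NeZero β] (w : V α β) : V α β :=
  (fun i => (if i = 0 then 1 + u1 else 1) * w.1 (i - 1),
   fun j => (if j = 0 then 1 + uu * vv else 1) * w.2 (j - 1))

/-- The inner product on `R1^α × R2^β`:
`⟨x,y⟩ = uv·ι(Σᵢ xᵢyᵢ) + Σⱼ x_{α+j} y_{α+j}` where `ι : R1 → R2` is the
natural inclusion. -/
def innerP {α β : ℕ} (x y : V α β) : R2 :=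
  uu * vv * TrivSqZeroExt.inl (∑ i, x.1 i * y.1 i) + ∑ j, x.2 j * y.2 j

/-- The additive dual of a code `C ⊆ R1^α × R2^β`. -/
def dualSet {α β : ℕ} (C : Set (V α β)) : Set (V α β) :=
  {y | ∀ x ∈ C, innerP x y = 0}

instance doubleNeZero (α : ℕ) [NeZero α] : NeZero (α + α) :=
  ⟨by have := NeZero.ne α; omega⟩

/-- The image space of the Gray map: `Z2^{2α+8β}`, grouped as a block of
`2α` coordinates followed by four blocks of `2β` coordinates. -/
abbrev W (α β : ℕ) :=
  (Fin (α + α) → Z2) × (Fin (β + β) → Z2) × (Fin (β + β) → Z2) ×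
    (Fin (β + β) → Z2) × (Fin (β + β) → Z2)

/-- Cyclic shift by one position of a tuple. -/
def cyc {n : ℕ} [NeZero n] {A : Type*} (f : Fin n → A) : Fin n → A :=
  fun i => f (i - 1)

/-- The block-shift permutation `σ` of `Z2^{2α+8β}`: the block of `2α`
coordinates and each of the four blocks of `2β` coordinates are cyclically
shifted by one position. -/
def sigmaW {α β : ℕ} [NeZero α] [NeZero β] (w : W α β) : W α β :=
  (cyc w.1, cyc w.2.1, cyc w.2.2.1, cyc w.2.2.2.1, cyc w.2.2.2.2)

/-- The Gray map `Φ : R1^α × R2^β → Z2^{2α+8β}`. -/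
def Phi {α β : ℕ} (w : V α β) : W α β :=
  let r : Fin α → Z2 := fun i => (w.1 i).fst
  let q : Fin α → Z2 := fun i => (w.1 i).snd
  let a : Fin β → Z2 := fun j => (w.2 j).fst.fst
  let b : Fin β → Z2 := fun j => (w.2 j).fst.snd
  let c : Fin β → Z2 := fun j => (w.2 j).snd.fst
  let d : Fin β → Z2 := fun j => (w.2 j).snd.snd
  (Fin.append q (fun i => q i + r i),
   Fin.append d (fun j => a j + d j),
   Fin.append (fun j => b j + d j) (fun j => a j + b j + d j),
   Fin.append (fun j => c j + d j) (fun j => a j + c j + d j),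
   Fin.append (fun j => b j + c j + d j) (fun j => a j + b j + c j + d j))

/-- Lee weight on `R1`: `w_L(r + uq) = w_H(q, q + r)`. -/
def leeR1 (x : R1) : ℕ :=
  (if x.snd ≠ 0 then 1 else 0) + (if x.snd + x.fst ≠ 0 then 1 else 0)

/-- Lee weight on `R2`:
`w_L(a+ub+vc+uvd) = w_H(d, a+d, b+d, a+b+d, c+d, a+c+d, b+c+d, a+b+c+d)`. -/
def leeR2 (y : R2) : ℕ :=
  let a := y.fst.fst; let b := y.fst.snd; let c := y.snd.fst; let d := y.snd.snd
  (if d ≠ 0 then 1 else 0) + (if a + d ≠ 0 then 1 else 0) +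
  (if b + d ≠ 0 then 1 else 0) + (if a + b + d ≠ 0 then 1 else 0) +
  (if c + d ≠ 0 then 1 else 0) + (if a + c + d ≠ 0 then 1 else 0) +
  (if b + c + d ≠ 0 then 1 else 0) + (if a + b + c + d ≠ 0 then 1 else 0)

/-- Lee weight on `R1^α × R2^β`: the sum of the Lee weights of the
coordinates. -/
def leeWt {α β : ℕ} (w : V α β) : ℕ :=
  ∑ i, leeR1 (w.1 i) + ∑ j, leeR2 (w.2 j)

/-- Hamming weight on `Z2^{2α+8β}`. -/
def wtW {α β : ℕ} (w : W α β) : ℕ :=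
  hammingNorm w.1 + hammingNorm w.2.1 + hammingNorm w.2.2.1 +
    hammingNorm w.2.2.2.1 + hammingNorm w.2.2.2.2

/-- Hamming distance on `Z2^{2α+8β}`. -/
def distW {α β : ℕ} (w w' : W α β) : ℕ :=
  hammingDist w.1 w'.1 + hammingDist w.2.1 w'.2.1 + hammingDist w.2.2.1 w'.2.2.1 +
    hammingDist w.2.2.2.1 w'.2.2.2.1 + hammingDist w.2.2.2.2 w'.2.2.2.2

attribute [local instance] Fin.instCommRing

lemma shiftS_iterate {α β : ℕ} [NeZero α] [NeZero β] (k : ℕ) (y : V α β) :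
    shiftS^[k] y = (fun i => y.1 (i - (k : Fin α)), fun j => y.2 (j - (k : Fin β))) := by
  induction k with
  | zero => simp
  | succ k ih =>
    rw [Function.iterate_succ_apply', ih]
    refine Prod.ext (funext fun i => ?_) (funext fun j => ?_) <;>
      simp [shiftS, sub_sub, Nat.cast_add, Nat.cast_one, add_comm]

/-- With `j = lcm(α, β)`, the inner product satisfies
`⟨S(x), y⟩ = ⟨x, S^{j−1}(y)⟩` for the cyclic shift `S`. -/
theorem inner_shift_eq_inner_iterate (α β : ℕ) [NeZero α] [NeZero β]
    (x y : V α β) :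
    innerP (shiftS x) y = innerP x (shiftS^[Nat.lcm α β - 1] y) := by
  have hlcm : 1 ≤ Nat.lcm α β :=
    Nat.one_le_iff_ne_zero.mpr (Nat.lcm_ne_zero (NeZero.ne α) (NeZero.ne β))
  have hcast : ∀ (n : ℕ) [NeZero n] (h : n ∣ Nat.lcm α β),
      ((Nat.lcm α β - 1 : ℕ) : Fin n) = -1 := by
    intro n _ h
    obtain ⟨c, hc⟩ := h
    have : (Nat.lcm α β - 1) + 1 = Nat.lcm α β := Nat.succ_pred_eq_of_pos hlcm
    have h0 : ((Nat.lcm α β : ℕ) : Fin n) = 0 := by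
      rw [hc]; push_cast; simp
    have := congrArg (Nat.cast : ℕ → Fin n) this
    push_cast at this
    rw [h0] at this
    linear_combination this
  rw [shiftS_iterate, hcast α (Nat.dvd_lcm_left α β), hcast β (Nat.dvd_lcm_right α β)]
  unfold innerP shiftS
  simp only [sub_neg_eq_add]
  congr 1
  · congr 2
    exact Fintype.sum_equiv (Equiv.subRight (1 : Fin α)) _ _
      (fun i => by simp)
  · exact Fintype.sum_equiv (Equiv.subRight (1 : Fin β)) _ _
      (fun j => by simp)

end
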